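/- For the follow-the-leader ODE system with N+1 ordered particles x_0 < ... < x_N on the real line, where the leader satisfies x_N' = v(0) and each other particle satisfies x_i' = v(ℓ/(x_{i+1} - x_i)) for a C¹ strictly decreasing velocity v, if the initial spacings satisfy x_{i+1}(0) - x_i(0) ≥ ℓ/R for some R > 0, then for all t ≥ 0 and all i, x_{i+1}(t) - x_i(t) ≥ ℓ/R. -/

import Mathlib

open Topology Filter Set


/-- Discrete maximum principle (lower spacing bound) for the follow-the-leader system. -/
theorem ftl_discrete_max_principle
    (N : ℕ) (v : ℝ → ℝ) (ℓ R : ℝ)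
    (hℓ : 0 < ℓ) (hR : 0 < R)
    (hv_smooth : ContDiffOn ℝ 1 v (Set.Ici 0))
    (hv_anti : StrictAntiOn v (Set.Ici 0))
    (x : ℕ → ℝ → ℝ)
    (hOrder : ∀ i < N, x i 0 < x (i + 1) 0)
    (hODE_leader : ∀ t ≥ (0:ℝ), HasDerivAt (x N) (v 0) t)
    (hODE : ∀ i < N, ∀ t ≥ (0:ℝ),
      HasDerivAt (x i) (v (ℓ / (x (i + 1) t - x i t))) t)
    (hInit : ∀ i < N, x (i + 1) 0 - x i 0 ≥ ℓ / R) :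
    ∀ t ≥ (0:ℝ), ∀ i < N, x (i + 1) t - x i t ≥ ℓ / R := by
  have hvmono : AntitoneOn v (Set.Ici 0) := hv_anti.antitoneOn
  -- continuity of each particle trajectory on [0, ∞)
  have hcx : ∀ i ≤ N, ContinuousOn (x i) (Set.Ici (0:ℝ)) := by
    intro i hi t ht
    rcases eq_or_lt_of_le hi with rfl | hlt
    · exact (hODE_leader t ht).continuousAt.continuousWithinAt
    · exact (hODE i hlt t ht).continuousAt.continuousWithinAt
  -- key claim with the moving barrier ℓ/R - ε(1+s)
  have key : ∀ T ≥ (0:ℝ), ∀ ε > (0:ℝ), ε * (1 + T) < ℓ / R →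
      ∀ s ∈ Set.Icc (0:ℝ) T, ∀ j < N,
        ℓ / R - ε * (1 + s) < x (j + 1) s - x j s := by
    intro T hT ε hε hεT
    by_contra hcon
    push_neg at hcon
    set S : Set ℝ := {s | s ∈ Set.Icc (0:ℝ) T ∧ ∃ j, j < N ∧
        x (j + 1) s - x j s ≤ ℓ / R - ε * (1 + s)} with hS
    have hSne : S.Nonempty := by
      obtain ⟨s, hs, j, hj, hle⟩ := hcon
      exact ⟨s, hs, j, hj, hle⟩
    -- continuity of the "gap minus barrier" functions on [0, T]
    have hφcont : ∀ j < N, ContinuousOn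
        (fun s => x (j + 1) s - x j s - (ℓ / R - ε * (1 + s))) (Set.Icc (0:ℝ) T) := by
      intro j hj
      have h1 : ContinuousOn (x (j + 1)) (Set.Icc (0:ℝ) T) :=
        (hcx (j + 1) hj).mono (Set.Icc_subset_Ici_self)
      have h2 : ContinuousOn (x j) (Set.Icc (0:ℝ) T) :=
        (hcx j (le_of_lt hj)).mono (Set.Icc_subset_Ici_self)
      have hbc : Continuous fun s : ℝ => ℓ / R - ε * (1 + s) := by continuity
      exact (h1.sub h2).sub hbc.continuousOn
    have hSclosed : IsClosed S := by
      have : S = ⋃ j ∈ Set.Iio N, (Set.Icc (0:ℝ) T ∩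
          (fun s => x (j + 1) s - x j s - (ℓ / R - ε * (1 + s))) ⁻¹' Set.Iic 0) := by
        ext s
        simp only [hS, Set.mem_setOf_eq, Set.mem_iUnion, Set.mem_inter_iff,
          Set.mem_preimage, Set.mem_Iic, Set.mem_Iio, sub_nonpos]
        constructor
        · rintro ⟨hs, j, hj, hle⟩
          exact ⟨j, hj, hs, by linarith⟩
        · rintro ⟨j, hj, hs, hle⟩
          exact ⟨hs, j, hj, by linarith⟩
      rw [this]
      refine Set.Finite.isClosed_biUnion (Set.finite_Iio N) ?_
      intro j hj
      have hj' : j < N := hj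
      exact (hφcont j hj').preimage_isClosed_of_isClosed isClosed_Icc isClosed_Iic
    have hSbdd : BddBelow S := ⟨0, fun s hs => hs.1.1⟩
    set t₀ : ℝ := sInf S with ht₀
    have ht₀S : t₀ ∈ S := hSclosed.csInf_mem hSne hSbdd
    obtain ⟨ht₀Icc, j, hj, hjle⟩ := ht₀S
    have ht₀pos : 0 < t₀ := by
      rcases eq_or_lt_of_le ht₀Icc.1 with h0 | h
      · exfalso
        have := hInit j hj
        rw [← h0] at hjle
        nlinarith
      · exact h
    -- before t₀, all gaps are strictly above the barrier
    have hbefore : ∀ s, 0 ≤ s → s < t₀ → ∀ k < N,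
        ℓ / R - ε * (1 + s) < x (k + 1) s - x k s := by
      intro s hs0 hst k hk
      by_contra hle
      push_neg at hle
      have hsS : s ∈ S := ⟨⟨hs0, le_trans hst.le ht₀Icc.2⟩, k, hk, hle⟩
      exact absurd (csInf_le hSbdd hsS) (not_le.mpr hst)
    -- at t₀, all gaps are at least the barrier (by continuity from the left)
    have hatt₀ : ∀ k < N, ℓ / R - ε * (1 + t₀) ≤ x (k + 1) t₀ - x k t₀ := by
      intro k hk
      have hsub : Set.Ico (0:ℝ) t₀ ⊆ Set.Icc (0:ℝ) T :=
        fun s hs => ⟨hs.1, le_trans hs.2.le ht₀Icc.2⟩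
      have hcw : ContinuousWithinAt
          (fun s => x (k + 1) s - x k s - (ℓ / R - ε * (1 + s))) (Set.Ico (0:ℝ) t₀) t₀ :=
        ((hφcont k hk) t₀ ⟨ht₀pos.le, ht₀Icc.2⟩).mono hsub
      have hne : (𝓝[Set.Ico (0:ℝ) t₀] t₀).NeBot := by
        rw [← mem_closure_iff_nhdsWithin_neBot, closure_Ico (ne_of_lt ht₀pos)]
        exact ⟨ht₀pos.le, le_refl _⟩
      have hev : ∀ᶠ s in 𝓝[Set.Ico (0:ℝ) t₀] t₀,
          0 ≤ x (k + 1) s - x k s - (ℓ / R - ε * (1 + s)) := by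
        filter_upwards [self_mem_nhdsWithin] with s hs
        have := hbefore s hs.1 hs.2 k hk
        linarith
      have := ge_of_tendsto hcw hev
      linarith
    have hgapt₀ : x (j + 1) t₀ - x j t₀ = ℓ / R - ε * (1 + t₀) :=
      le_antisymm hjle (hatt₀ j hj)
    -- the barrier is still positive at t₀
    have hbpos : 0 < ℓ / R - ε * (1 + t₀) := by
      have : ε * (1 + t₀) ≤ ε * (1 + T) := by nlinarith [ht₀Icc.2]
      linarith
    have hgpos : 0 < x (j + 1) t₀ - x j t₀ := by rw [hgapt₀]; exact hbpos
    -- the derivative of the j-th gap at t₀ is nonnegative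
    have hx0 : HasDerivAt (x j) (v (ℓ / (x (j + 1) t₀ - x j t₀))) t₀ :=
      hODE j hj t₀ ht₀pos.le
    have hapos : 0 < ℓ / (x (j + 1) t₀ - x j t₀) := div_pos hℓ hgpos
    obtain ⟨w, hx1, hw⟩ : ∃ w, HasDerivAt (x (j + 1)) w t₀ ∧
        v (ℓ / (x (j + 1) t₀ - x j t₀)) ≤ w := by
      rcases eq_or_lt_of_le (Nat.succ_le_of_lt hj) with hN | hN
      · refine ⟨v 0, ?_, ?_⟩
        · have := hODE_leader t₀ ht₀pos.le
          rwa [← hN] at this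
        exact hvmono (le_refl (0:ℝ)) hapos.le hapos.le
      · refine ⟨v (ℓ / (x (j + 2) t₀ - x (j + 1) t₀)), hODE (j + 1) hN t₀ ht₀pos.le, ?_⟩
        have hg1pos : 0 < x (j + 2) t₀ - x (j + 1) t₀ := by
          have := hatt₀ (j + 1) hN
          linarith
        have hga : x (j + 1) t₀ - x j t₀ ≤ x (j + 2) t₀ - x (j + 1) t₀ := by
          have := hatt₀ (j + 1) hN
          linarith
        have : ℓ / (x (j + 2) t₀ - x (j + 1) t₀) ≤ ℓ / (x (j + 1) t₀ - x j t₀) := by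
          gcongr
        exact hvmono (le_of_lt (div_pos hℓ hg1pos)) hapos.le this
    -- φ := gap minus barrier has positive derivative at t₀ but vanishes there
    have hb : HasDerivAt (fun s => ℓ / R - ε * (1 + s)) (-ε) t₀ := by
      have h1 : HasDerivAt (fun s : ℝ => ε * (1 + s)) ε t₀ := by
        simpa using ((hasDerivAt_id t₀).const_add (1:ℝ)).const_mul ε
      exact ((hasDerivAt_const t₀ (ℓ / R)).sub h1).congr_deriv (by ring)
    have hφ : HasDerivAt (fun s => x (j + 1) s - x j s - (ℓ / R - ε * (1 + s)))
        (w - v (ℓ / (x (j + 1) t₀ - x j t₀)) + ε) t₀ := by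
      have := (hx1.sub hx0).sub hb
      exact this.congr_deriv (by ring)
    set D := w - v (ℓ / (x (j + 1) t₀ - x j t₀)) + ε with hD
    have hDpos : 0 < D := by simp only [hD]; linarith
    have hslope := hasDerivAt_iff_tendsto_slope.mp hφ
    have hevpos : ∀ᶠ s in 𝓝[≠] t₀,
        0 < slope (fun s => x (j + 1) s - x j s - (ℓ / R - ε * (1 + s))) t₀ s :=
      hslope.eventually (eventually_gt_nhds hDpos)
    have hle : 𝓝[<] t₀ ≤ 𝓝[≠] t₀ :=
      nhdsWithin_mono _ fun s hs => ne_of_lt hs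
    have hIoo : Set.Ioo 0 t₀ ∈ 𝓝[<] t₀ := Ioo_mem_nhdsLT_of_mem ⟨ht₀pos, le_refl _⟩
    obtain ⟨s, hspos, hsIoo⟩ := ((hevpos.filter_mono hle).and
      (eventually_of_mem hIoo fun s hs => hs)).exists
    -- contradiction: φ s < 0 from the slope, but φ s > 0 since s < t₀
    have hφt₀ : x (j + 1) t₀ - x j t₀ - (ℓ / R - ε * (1 + t₀)) = 0 := by
      rw [hgapt₀]; ring
    rw [slope_def_field, hφt₀, sub_zero] at hspos
    have hsneg : s - t₀ < 0 := by linarith [hsIoo.2]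
    have hφs : x (j + 1) s - x j s - (ℓ / R - ε * (1 + s)) < 0 := by
      by_contra hge
      push_neg at hge
      have : (x (j + 1) s - x j s - (ℓ / R - ε * (1 + s))) / (s - t₀) ≤ 0 :=
        div_nonpos_of_nonneg_of_nonpos hge hsneg.le
      linarith
    have := hbefore s hsIoo.1.le hsIoo.2 j hj
    linarith
  -- conclude by letting ε → 0
  intro t ht i hi
  by_contra hlt
  push_neg at hlt
  set M : ℝ := max (x (i + 1) t - x i t) 0 with hM
  have hMlt : M < ℓ / R := max_lt hlt (div_pos hℓ hR)
  have h1t : (0:ℝ) < 1 + t := by linarith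
  set ε : ℝ := (ℓ / R - M) / (2 * (1 + t)) with hε
  have hεpos : 0 < ε := div_pos (by linarith) (by linarith)
  have hεt : ε * (1 + t) = (ℓ / R - M) / 2 := by
    rw [hε, div_mul_eq_mul_div, div_eq_div_iff (mul_pos two_pos h1t).ne' two_ne_zero]
    ring
  have hεT : ε * (1 + t) < ℓ / R := by
    rw [hεt]
    have : 0 ≤ M := le_max_right _ _
    linarith
  have := key t ht ε hεpos hεT t ⟨ht, le_refl t⟩ i hi
  rw [hεt] at this
  have hgM : x (i + 1) t - x i t ≤ M := le_max_left _ _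
  linarith
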